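/- Let $a > 0$, let $U_i$ be a finite nonempty upwind stencil with displacements $\Delta x_{ik} = x_k - x_i < 0$ and weights $w_{ik} > 0$ for all $k \in U_i$, and define the forward Euler update $u_i^{n+1} = u_i^n - a \Delta t\, \frac{\sum_{k \in U_i} w_{ik} \Delta x_{ik} (u_k^n - u_i^n)}{\sum_{k \in U_i} w_{ik} \Delta x_{ik}^2}$ with $\Delta t > 0$. If the CFL condition $1 + a \Delta t\, \frac{\sum_{k \in U_i} w_{ik} \Delta x_{ik}}{\sum_{k \in U_i} w_{ik} \Delta x_{ik}^2} \geq 0$ holds, then $u_i^{n+1}$ is a convex combination of $u_i^n$ and the values $u_k^n$, $k \in U_i$: the coefficient of each $u_k^n$ is $-a\Delta t\, w_{ik}\Delta x_{ik} / \sum_k w_{ik}\Delta x_{ik}^2 \geq 0$, the coefficient of $u_i^n$ is $1 + a \Delta t \sum_k w_{ik}\Delta x_{ik} / \sum_k w_{ik}\Delta x_{ik}^2 \geq 0$, all coefficients sum to $1$, and consequently $\min\big(u_i^n, \min_{k \in U_i} u_k^n\big) \leq u_i^{n+1} \leq \max\big(u_i^n, \max_{k \in U_i} u_k^n\big)$.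 -/

import Mathlib

open Finset

/-- **Positivity of the first-order 1D meshless upwind scheme under CFL.**
For `a > 0`, an upwind stencil (`Δx k < 0`) with positive weights, and a time step
satisfying the CFL condition, the forward Euler update is a convex combination of the
old stencil values: all coefficients are nonnegative, they sum to one, and the update
satisfies the discrete maximum principle. -/
theorem stmt_5 {ι : Type*} (S : Finset ι) (hS : S.Nonempty)
    (a Δt : ℝ) (ha : 0 < a) (hΔt : 0 < Δt)
    (dx w : ι → ℝ) (hdx : ∀ k ∈ S, dx k < 0) (hw : ∀ k ∈ S, 0 < w k)
    (un : ι → ℝ) (ui : ℝ)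
    (hCFL : 0 ≤ 1 + a * Δt * (∑ k ∈ S, w k * dx k) / (∑ k ∈ S, w k * dx k ^ 2)) :
    (∀ k ∈ S, 0 ≤ -(a * Δt * w k * dx k) / (∑ k ∈ S, w k * dx k ^ 2)) ∧
    0 ≤ 1 + a * Δt * (∑ k ∈ S, w k * dx k) / (∑ k ∈ S, w k * dx k ^ 2) ∧
    ((1 + a * Δt * (∑ k ∈ S, w k * dx k) / (∑ k ∈ S, w k * dx k ^ 2)) +
        ∑ k ∈ S, -(a * Δt * w k * dx k) / (∑ k ∈ S, w k * dx k ^ 2) = 1) ∧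
    min ui (S.inf' hS un) ≤
      ui - a * Δt * (∑ k ∈ S, w k * dx k * (un k - ui)) / (∑ k ∈ S, w k * dx k ^ 2) ∧
    ui - a * Δt * (∑ k ∈ S, w k * dx k * (un k - ui)) / (∑ k ∈ S, w k * dx k ^ 2) ≤
      max ui (S.sup' hS un) := by
  have hDpos : 0 < ∑ k ∈ S, w k * dx k ^ 2 :=
    Finset.sum_pos (fun k hk => mul_pos (hw k hk)
      (pow_two_pos_of_ne_zero (ne_of_lt (hdx k hk)))) hS
  set D := ∑ k ∈ S, w k * dx k ^ 2 with hDdef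
  have hcoef : ∀ k ∈ S, 0 ≤ -(a * Δt * w k * dx k) / D := fun k hk =>
    div_nonneg (by nlinarith [mul_pos (mul_pos (mul_pos ha hΔt) (hw k hk)) (neg_pos.mpr (hdx k hk))]) hDpos.le
  have hneg : ∑ k ∈ S, -(a * Δt * w k * dx k) = -(a * Δt * ∑ k ∈ S, w k * dx k) := by
    rw [Finset.mul_sum, ← Finset.sum_neg_distrib]
    exact Finset.sum_congr rfl fun k hk => by ring
  have hsum1 : (1 + a * Δt * (∑ k ∈ S, w k * dx k) / D) +
      ∑ k ∈ S, -(a * Δt * w k * dx k) / D = 1 := by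
    rw [← Finset.sum_div, hneg]
    field_simp
    ring
  have key : ui - a * Δt * (∑ k ∈ S, w k * dx k * (un k - ui)) / D =
      (1 + a * Δt * (∑ k ∈ S, w k * dx k) / D) * ui +
      ∑ k ∈ S, (-(a * Δt * w k * dx k) / D) * un k := by
    have h1 : ∑ k ∈ S, w k * dx k * (un k - ui) =
        (∑ k ∈ S, w k * dx k * un k) - (∑ k ∈ S, w k * dx k) * ui := by
      rw [Finset.sum_mul, ← Finset.sum_sub_distrib]
      exact Finset.sum_congr rfl fun k hk => by ring
    have h2 : ∑ k ∈ S, (-(a * Δt * w k * dx k) / D) * un k =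
        -(a * Δt * (∑ k ∈ S, w k * dx k * un k)) / D := by
      rw [Finset.mul_sum, ← Finset.sum_neg_distrib, Finset.sum_div]
      exact Finset.sum_congr rfl fun k hk => by ring
    rw [h1, h2]
    field_simp
    ring
  refine ⟨hcoef, hCFL, hsum1, ?_, ?_⟩
  · rw [key]
    set m := min ui (S.inf' hS un) with hm
    calc m = (1 + a * Δt * (∑ k ∈ S, w k * dx k) / D) * m +
            ∑ k ∈ S, (-(a * Δt * w k * dx k) / D) * m := by
          rw [← Finset.sum_mul, ← add_mul, hsum1, one_mul]
      _ ≤ _ := by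
          refine add_le_add (mul_le_mul_of_nonneg_left (min_le_left _ _) hCFL) ?_
          refine Finset.sum_le_sum fun k hk => mul_le_mul_of_nonneg_left ?_ (hcoef k hk)
          exact le_trans (min_le_right _ _) (Finset.inf'_le _ hk)
  · rw [key]
    set M := max ui (S.sup' hS un) with hM
    calc (1 + a * Δt * (∑ k ∈ S, w k * dx k) / D) * ui +
            ∑ k ∈ S, (-(a * Δt * w k * dx k) / D) * un k
        ≤ (1 + a * Δt * (∑ k ∈ S, w k * dx k) / D) * M +
            ∑ k ∈ S, (-(a * Δt * w k * dx k) / D) * M := by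
          refine add_le_add (mul_le_mul_of_nonneg_left (le_max_left _ _) hCFL) ?_
          refine Finset.sum_le_sum fun k hk => mul_le_mul_of_nonneg_left ?_ (hcoef k hk)
          exact le_trans (Finset.le_sup' _ hk) (le_max_right _ _)
      _ = M := by rw [← Finset.sum_mul, ← add_mul, hsum1, one_mul]
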